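/- (Control, value iteration error recursion) Suppose V_i = S* V_{i-1} + ε_i, and let π'_i = argmax_π S^π V_{i-1}. If γ' ≥ max(‖G^{π'_i}‖_∞, ‖G^{π*}‖_∞), then ‖V_i - V*‖_∞ ≤ γ' ‖V_{i-1} - V*‖_∞ + ‖ε_i‖_∞. -/
import Mathlib


open Matrix

/-- Supremum norm on vectors. -/
noncomputable def vnorm {d : ℕ} (v : Fin d → ℝ) : ℝ := ⨆ i, |v i|

/-- Maximum absolute row sum: the operator norm induced by the supremum norm. -/
noncomputable def mnorm {d : ℕ} (M : Matrix (Fin d) (Fin d) ℝ) : ℝ :=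
  ⨆ i, ∑ j, |M i j|

/-- Transition matrix of a deterministic policy. -/
def Pmat {d m : ℕ} (P : Fin d → Fin m → Fin d → ℝ) (pol : Fin d → Fin m) :
    Matrix (Fin d) (Fin d) ℝ :=
  fun x y => P x (pol x) y

/-- Reward vector of a deterministic policy. -/
def rvec {d m : ℕ} (r : Fin d → Fin m → ℝ) (pol : Fin d → Fin m) : Fin d → ℝ :=
  fun x => r x (pol x)

/-- The Varga operator `S^π V = (I - γ P̂^π)⁻¹ (r^π + γ (P^π - P̂^π) V)`. -/
noncomputable def varga {d : ℕ} (γ : ℝ) (Ppol Phatpol : Matrix (Fin d) (Fin d) ℝ)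
    (rpol V : Fin d → ℝ) : Fin d → ℝ :=
  ((1 - γ • Phatpol)⁻¹).mulVec (rpol + γ • ((Ppol - Phatpol).mulVec V))

/-- The Varga optimality operator `S* V = max_π S^π V` (componentwise over policies). -/
noncomputable def Sstar {d m : ℕ} (γ : ℝ) (P Phat : Fin d → Fin m → Fin d → ℝ)
    (r : Fin d → Fin m → ℝ) (V : Fin d → ℝ) : Fin d → ℝ :=
  fun x => ⨆ pol : Fin d → Fin m, varga γ (Pmat P pol) (Pmat Phat pol) (rvec r pol) V x


lemma abs_le_vnorm {d : ℕ} (v : Fin d → ℝ) (j : Fin d) : |v j| ≤ vnorm v :=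
  le_ciSup (f := fun i => |v i|) (Set.Finite.bddAbove (Set.finite_range _)) j

lemma rowsum_le_mnorm {d : ℕ} (M : Matrix (Fin d) (Fin d) ℝ) (x : Fin d) :
    (∑ j, |M x j|) ≤ mnorm M :=
  le_ciSup (f := fun i => ∑ j, |M i j|) (Set.Finite.bddAbove (Set.finite_range _)) x

section Aux

attribute [local instance] Matrix.linftyOpNormedRing Matrix.linftyOpNormedAlgebra

variable {d : ℕ}

/-- Norm bound for `γ • Q` with a row-stochastic `Q`. -/
lemma aux_norm_lt_one {γ : ℝ} (hγ0 : 0 ≤ γ) (hγ1 : γ < 1)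
    (Q : Matrix (Fin d) (Fin d) ℝ) (hQ0 : ∀ i j, 0 ≤ Q i j) (hQ1 : ∀ i, ∑ j, Q i j = 1) :
    ‖γ • Q‖ < 1 := by
  have h1 : ‖Q‖ ≤ 1 := by
    rw [Matrix.linfty_opNorm_def]
    have : (Finset.univ.sup fun i : Fin d => ∑ j, ‖Q i j‖₊) ≤ 1 := by
      refine Finset.sup_le fun i _ => ?_
      rw [← NNReal.coe_le_coe, NNReal.coe_sum, NNReal.coe_one]
      calc (∑ j, (‖Q i j‖₊ : ℝ)) = ∑ j, Q i j := by
            refine Finset.sum_congr rfl fun j _ => ?_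
            rw [coe_nnnorm, Real.norm_eq_abs, abs_of_nonneg (hQ0 i j)]
        _ = 1 := hQ1 i
        _ ≤ 1 := le_refl _
    exact_mod_cast this
  calc ‖γ • Q‖ = |γ| * ‖Q‖ := by rw [norm_smul, Real.norm_eq_abs]
    _ ≤ γ * 1 := by rw [abs_of_nonneg hγ0]; exact mul_le_mul_of_nonneg_left h1 hγ0
    _ < 1 := by linarith

/-- `1 - t` is a unit (in particular has unit determinant) when `‖t‖ < 1`. -/
lemma aux_isUnit_det (t : Matrix (Fin d) (Fin d) ℝ) (ht : ‖t‖ < 1) :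
    IsUnit (1 - t).det := by
  haveI : CompleteSpace (Matrix (Fin d) (Fin d) ℝ) := FiniteDimensional.complete ℝ _
  exact (Matrix.isUnit_iff_isUnit_det _).mp (isUnit_one_sub_of_norm_lt_one ht)

/-- Entries of the Neumann inverse `(1 - t)⁻¹` are nonnegative when `t` is entrywise
nonnegative and `‖t‖ < 1`. -/
lemma aux_inv_nonneg (t : Matrix (Fin d) (Fin d) ℝ) (ht : ‖t‖ < 1)
    (h0 : ∀ i j, 0 ≤ t i j) (i j : Fin d) : 0 ≤ (1 - t)⁻¹ i j := by
  haveI : CompleteSpace (Matrix (Fin d) (Fin d) ℝ) := FiniteDimensional.complete ℝ _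
  have hpow : ∀ n : ℕ, ∀ i j : Fin d, 0 ≤ (t ^ n) i j := by
    intro n
    induction n with
    | zero =>
      intro i j
      rw [pow_zero, Matrix.one_apply]
      split <;> norm_num
    | succ n ih =>
      intro i j
      rw [pow_succ, Matrix.mul_apply]
      exact Finset.sum_nonneg fun k _ => mul_nonneg (ih i k) (h0 k j)
  have hs : HasSum (fun n : ℕ => t ^ n) (Ring.inverse (1 - t)) := hasSum_geom_series_inverse t ht
  let L : Matrix (Fin d) (Fin d) ℝ →ₗ[ℝ] ℝ :=
    { toFun := fun M => M i j, map_add' := fun _ _ => rfl, map_smul' := fun _ _ => rfl }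
  have hsL := hs.mapL L.toContinuousLinearMap
  have := hasSum_le (fun n => hpow n i j) hasSum_zero hsL
  rw [Matrix.nonsing_inv_eq_ringInverse]
  exact this

/-- Unit determinant for `1 - γ • Q` with row-stochastic `Q`. -/
lemma aux_isUnit_det' {γ : ℝ} (hγ0 : 0 ≤ γ) (hγ1 : γ < 1)
    (Q : Matrix (Fin d) (Fin d) ℝ) (hQ0 : ∀ i j, 0 ≤ Q i j) (hQ1 : ∀ i, ∑ j, Q i j = 1) :
    IsUnit (1 - γ • Q).det :=
  aux_isUnit_det _ (aux_norm_lt_one hγ0 hγ1 Q hQ0 hQ1)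

/-- Nonnegative inverse entries for `1 - γ • Q` with row-stochastic `Q`. -/
lemma aux_inv_nonneg' {γ : ℝ} (hγ0 : 0 ≤ γ) (hγ1 : γ < 1)
    (Q : Matrix (Fin d) (Fin d) ℝ) (hQ0 : ∀ i j, 0 ≤ Q i j) (hQ1 : ∀ i, ∑ j, Q i j = 1)
    (i j : Fin d) : 0 ≤ (1 - γ • Q)⁻¹ i j :=
  aux_inv_nonneg _ (aux_norm_lt_one hγ0 hγ1 Q hQ0 hQ1)
    (fun i j => smul_nonneg hγ0 (hQ0 i j)) i j

end Aux

/-- Monotonicity of multiplication by an entrywise nonnegative matrix. -/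
lemma aux_mulVec_mono {d : ℕ} (M : Matrix (Fin d) (Fin d) ℝ) (hM : ∀ i j, 0 ≤ M i j)
    {u v : Fin d → ℝ} (h : ∀ j, u j ≤ v j) (i : Fin d) : M.mulVec u i ≤ M.mulVec v i := by
  simp only [Matrix.mulVec, dotProduct]
  exact Finset.sum_le_sum fun j _ => mul_le_mul_of_nonneg_left (h j) (hM i j)

/-- Pointwise bound `|M v| ≤ ‖M‖ ‖v‖`. -/
lemma aux_mulVec_bound {d : ℕ} (M : Matrix (Fin d) (Fin d) ℝ) (v : Fin d → ℝ) (x : Fin d) :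
    |M.mulVec v x| ≤ mnorm M * vnorm v := by
  have hv : ∀ j, |v j| ≤ vnorm v := abs_le_vnorm v
  have hv0 : 0 ≤ vnorm v := le_trans (abs_nonneg _) (hv x)
  have hrow : (∑ j, |M x j|) ≤ mnorm M := rowsum_le_mnorm M x
  calc |M.mulVec v x| = |∑ j, M x j * v j| := rfl
    _ ≤ ∑ j, |M x j * v j| := Finset.abs_sum_le_sum_abs _ _
    _ ≤ ∑ j, |M x j| * vnorm v := by
        refine Finset.sum_le_sum fun j _ => ?_
        rw [abs_mul]; exact mul_le_mul_of_nonneg_left (hv j) (abs_nonneg _)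
    _ = (∑ j, |M x j|) * vnorm v := by rw [Finset.sum_mul]
    _ ≤ mnorm M * vnorm v := mul_le_mul_of_nonneg_right hrow hv0

/-- The difference identity `S^π U - S^π V = G^π (U - V)`. -/
lemma aux_varga_sub {d : ℕ} (γ : ℝ) (Pp Php : Matrix (Fin d) (Fin d) ℝ) (rp U V : Fin d → ℝ) :
    varga γ Pp Php rp U - varga γ Pp Php rp V
      = ((1 - γ • Php)⁻¹ * (γ • (Pp - Php))).mulVec (U - V) := by
  unfold varga
  rw [← Matrix.mulVec_sub, ← Matrix.mulVec_mulVec]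
  congr 1
  funext x
  simp [Matrix.mulVec_sub, Matrix.smul_mulVec]

/-- `S^π V = V` for a `V` satisfying the policy Bellman equation. -/
lemma aux_varga_fixed {d : ℕ} (γ : ℝ) (Pp Php : Matrix (Fin d) (Fin d) ℝ) (rp V : Fin d → ℝ)
    (hdet : IsUnit (1 - γ • Php).det)
    (hV : V = rp + γ • Pp.mulVec V) :
    varga γ Pp Php rp V = V := by
  unfold varga
  have key : rp + γ • ((Pp - Php).mulVec V) = (1 - γ • Php).mulVec V := by
    funext x
    have hx : V x = rp x + γ * Pp.mulVec V x := by
      have := congrFun hV x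
      simpa only [Pi.add_apply, Pi.smul_apply, smul_eq_mul] using this
    simp only [Matrix.sub_mulVec, Matrix.one_mulVec, Matrix.smul_mulVec,
      Pi.add_apply, Pi.smul_apply, Pi.sub_apply, smul_eq_mul]
    linarith [hx]
  rw [key, Matrix.mulVec_mulVec, Matrix.nonsing_inv_mul _ hdet, Matrix.one_mulVec]

/-- `S^π V ≤ V` when `V` dominates the policy Bellman operator. -/
lemma aux_varga_le {d : ℕ} (γ : ℝ) (Pp Php : Matrix (Fin d) (Fin d) ℝ) (rp V : Fin d → ℝ)
    (hN : ∀ i j, 0 ≤ (1 - γ • Php)⁻¹ i j)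
    (hdet : IsUnit (1 - γ • Php).det)
    (hV : ∀ x, rp x + γ * Pp.mulVec V x ≤ V x) (x : Fin d) :
    varga γ Pp Php rp V x ≤ V x := by
  have h1 : ∀ y, (rp + γ • ((Pp - Php).mulVec V)) y ≤ ((1 - γ • Php).mulVec V) y := by
    intro y
    simp only [Matrix.sub_mulVec, Matrix.one_mulVec, Matrix.smul_mulVec,
      Pi.add_apply, Pi.smul_apply, Pi.sub_apply, smul_eq_mul]
    linarith [hV y]
  have h2 := aux_mulVec_mono _ hN h1 x
  have h3 : ((1 - γ • Php)⁻¹).mulVec ((1 - γ • Php).mulVec V) = V := by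
    rw [Matrix.mulVec_mulVec, Matrix.nonsing_inv_mul _ hdet, Matrix.one_mulVec]
  calc varga γ Pp Php rp V x
      ≤ ((1 - γ • Php)⁻¹).mulVec ((1 - γ • Php).mulVec V) x := h2
    _ = V x := by rw [h3]

/-- Control, value iteration error recursion (Lemma 6):
if `V_i = S* V_{i-1} + ε_i` and `π'_i` attains the maximum in `S* V_{i-1}`, then
`‖V_i - V*‖_∞ ≤ γ' ‖V_{i-1} - V*‖_∞ + ‖ε_i‖_∞`. -/
theorem osvi_control_recursion {d m : ℕ} (hm : 0 < m)
    (γ : ℝ) (hγ0 : 0 ≤ γ) (hγ1 : γ < 1)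
    (P Phat : Fin d → Fin m → Fin d → ℝ) (r : Fin d → Fin m → ℝ)
    (hP : ∀ x a, (∀ y, 0 ≤ P x a y) ∧ ∑ y, P x a y = 1)
    (hPhat : ∀ x a, (∀ y, 0 ≤ Phat x a y) ∧ ∑ y, Phat x a y = 1)
    (Vstar : Fin d → ℝ) (πstar : Fin d → Fin m)
    (hbell : ∀ x, Vstar x = ⨆ a, (r x a + γ * ∑ y, P x a y * Vstar y))
    (hopt : ∀ x, Vstar x = r x (πstar x) + γ * ∑ y, P x (πstar x) y * Vstar y)
    (W Vi ε : Fin d → ℝ) (π' : Fin d → Fin m)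
    (hargmax : varga γ (Pmat P π') (Pmat Phat π') (rvec r π') W = Sstar γ P Phat r W)
    (hVi : Vi = Sstar γ P Phat r W + ε)
    (γ' : ℝ)
    (hγ'1 : mnorm ((1 - γ • Pmat Phat π')⁻¹ *
      (γ • (Pmat P π' - Pmat Phat π'))) ≤ γ')
    (hγ'2 : mnorm ((1 - γ • Pmat Phat πstar)⁻¹ *
      (γ • (Pmat P πstar - Pmat Phat πstar))) ≤ γ') :
    vnorm (Vi - Vstar) ≤ γ' * vnorm (W - Vstar) + vnorm ε := by
  haveI : Nonempty (Fin m) := Fin.pos_iff_nonempty.mp hm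
  -- handle the degenerate case d = 0
  rcases isEmpty_or_nonempty (Fin d) with hd | hd
  · have h0 : ∀ v : Fin d → ℝ, vnorm v = 0 := fun v => by
      rw [vnorm, Real.iSup_of_isEmpty]
    rw [h0, h0, h0]
    norm_num
  -- generic facts about the policy matrices
  have hdet : ∀ pol : Fin d → Fin m, IsUnit (1 - γ • Pmat Phat pol).det := fun pol =>
    aux_isUnit_det' hγ0 hγ1 _ (fun i j => (hPhat i (pol i)).1 j) (fun i => (hPhat i (pol i)).2)
  have hNpos : ∀ pol : Fin d → Fin m, ∀ i j, 0 ≤ (1 - γ • Pmat Phat pol)⁻¹ i j := fun pol =>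
    aux_inv_nonneg' hγ0 hγ1 _ (fun i j => (hPhat i (pol i)).1 j) (fun i => (hPhat i (pol i)).2)
  -- Bellman domination: for every policy, r^π + γ P^π V* ≤ V*
  have hdom : ∀ pol : Fin d → Fin m, ∀ x,
      rvec r pol x + γ * (Pmat P pol).mulVec Vstar x ≤ Vstar x := by
    intro pol x
    have : r x (pol x) + γ * ∑ y, P x (pol x) y * Vstar y
        ≤ ⨆ a, (r x a + γ * ∑ y, P x a y * Vstar y) :=
      le_ciSup (f := fun a => r x a + γ * ∑ y, P x a y * Vstar y)
        (Set.Finite.bddAbove (Set.finite_range _)) (pol x)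
    rw [hbell x]
    exact this
  -- S^π V* ≤ V* for every policy
  have hSle : ∀ pol : Fin d → Fin m, ∀ x,
      varga γ (Pmat P pol) (Pmat Phat pol) (rvec r pol) Vstar x ≤ Vstar x := fun pol =>
    aux_varga_le γ _ _ _ _ (hNpos pol) (hdet pol) (hdom pol)
  -- S^{π*} V* = V*
  have hfix : varga γ (Pmat P πstar) (Pmat Phat πstar) (rvec r πstar) Vstar = Vstar := by
    refine aux_varga_fixed γ _ _ _ _ (hdet πstar) ?_
    funext x
    simpa [rvec, Pmat, Matrix.mulVec, dotProduct] using hopt x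
  -- nonnegativity of vnorm (d > 0)
  have hvW : 0 ≤ vnorm (W - Vstar) := by
    obtain ⟨x⟩ := hd
    exact le_trans (abs_nonneg _) (abs_le_vnorm (W - Vstar) x)
  -- pointwise bound on |S* W x - V* x|
  have hmain : ∀ x, |Sstar γ P Phat r W x - Vstar x| ≤ γ' * vnorm (W - Vstar) := by
    intro x
    set K1 := (1 - γ • Pmat Phat π')⁻¹ * (γ • (Pmat P π' - Pmat Phat π')) with hK1
    set K2 := (1 - γ • Pmat Phat πstar)⁻¹ * (γ • (Pmat P πstar - Pmat Phat πstar)) with hK2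
    have hb1 : |K1.mulVec (W - Vstar) x| ≤ γ' * vnorm (W - Vstar) :=
      le_trans (aux_mulVec_bound _ _ _) (mul_le_mul_of_nonneg_right hγ'1 hvW)
    have hb2 : |K2.mulVec (W - Vstar) x| ≤ γ' * vnorm (W - Vstar) :=
      le_trans (aux_mulVec_bound _ _ _) (mul_le_mul_of_nonneg_right hγ'2 hvW)
    rw [abs_le]
    constructor
    · -- lower bound via π*
      have h1 : varga γ (Pmat P πstar) (Pmat Phat πstar) (rvec r πstar) W x
          ≤ Sstar γ P Phat r W x :=
        le_ciSup (Set.Finite.bddAbove (Set.finite_range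
          (fun pol : Fin d → Fin m =>
            varga γ (Pmat P pol) (Pmat Phat pol) (rvec r pol) W x))) πstar
      have h2 : varga γ (Pmat P πstar) (Pmat Phat πstar) (rvec r πstar) W x - Vstar x
          = K2.mulVec (W - Vstar) x := by
        have := congrFun (aux_varga_sub γ (Pmat P πstar) (Pmat Phat πstar)
          (rvec r πstar) W Vstar) x
        rw [hfix] at this
        simpa only [Pi.sub_apply, hK2] using this
      have := neg_abs_le (K2.mulVec (W - Vstar) x)
      linarith
    · -- upper bound via π'
      have h1 : Sstar γ P Phat r W x
          = varga γ (Pmat P π') (Pmat Phat π') (rvec r π') W x := (congrFun hargmax x).symm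
      have h2 : varga γ (Pmat P π') (Pmat Phat π') (rvec r π') W x
            - varga γ (Pmat P π') (Pmat Phat π') (rvec r π') Vstar x
          = K1.mulVec (W - Vstar) x := by
        have := congrFun (aux_varga_sub γ (Pmat P π') (Pmat Phat π')
          (rvec r π') W Vstar) x
        simpa only [Pi.sub_apply, hK1] using this
      have h3 := hSle π' x
      have := le_abs_self (K1.mulVec (W - Vstar) x)
      linarith
  -- conclude
  rw [vnorm]
  refine ciSup_le fun x => ?_
  have hε : |ε x| ≤ vnorm ε := abs_le_vnorm ε x
  have hVix : (Vi - Vstar) x = (Sstar γ P Phat r W x - Vstar x) + ε x := by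
    rw [hVi]; simp; ring
  rw [hVix]
  calc |(Sstar γ P Phat r W x - Vstar x) + ε x|
      ≤ |Sstar γ P Phat r W x - Vstar x| + |ε x| := abs_add_le _ _
    _ ≤ γ' * vnorm (W - Vstar) + vnorm ε := add_le_add (hmain x) hε
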